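/- For every a > 0 and b ∈ ℝ, sup_{u ∈ ℝ} [ log(2·cosh(a·u + b)) − a·u²/2 ] = max_{m ∈ [−1,1]} [ a·m²/2 + b·m − g(m) ], and both sides are finite. -/

import Mathlib

open Real

/-- Minus the binary entropy as a function of the magnetization `m`:
`g(m) = ((1-m)/2) log((1-m)/2) + ((1+m)/2) log((1+m)/2)`
(with the convention `0·log 0 = 0`, automatic since `Real.log 0 = 0`). -/
noncomputable def gEntropy (m : ℝ) : ℝ :=
  ((1 - m) / 2) * Real.log ((1 - m) / 2) + ((1 + m) / 2) * Real.log ((1 + m) / 2)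

/-- Equality of the two variational formulas for the Curie–Weiss free energy
(methods M1 via Gaussian transformation and M2 via counting configurations):
`sup_u [log(2 cosh(a u + b)) - a u²/2] = max_{m ∈ [-1,1]} [a m²/2 + b m - g(m)]`,
both sides being finite (the suprema are over bounded-above ranges). -/

lemma legendre_le (x m : ℝ) (hm1 : -1 ≤ m) (hm2 : m ≤ 1) :
    m * x - gEntropy m ≤ Real.log (2 * Real.cosh x) := by
  have hZ : (0:ℝ) < 2 * Real.cosh x := by positivity
  have hZeq : 2 * Real.cosh x = Real.exp x + Real.exp (-x) := by
    rw [Real.cosh_eq]; ring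
  rcases eq_or_lt_of_le hm2 with h1 | h1
  · subst h1
    simp only [gEntropy]
    norm_num
    have : Real.exp x ≤ 2 * Real.cosh x := by
      rw [hZeq]; nlinarith [Real.exp_pos (-x)]
    calc x = Real.log (Real.exp x) := (Real.log_exp x).symm
      _ ≤ Real.log (2 * Real.cosh x) := Real.log_le_log (Real.exp_pos x) this
  rcases eq_or_lt_of_le hm1 with h2 | h2
  · rw [← h2]
    simp only [gEntropy]
    norm_num
    have : Real.exp (-x) ≤ 2 * Real.cosh x := by
      rw [hZeq]; nlinarith [Real.exp_pos x]
    have := Real.log_le_log (Real.exp_pos (-x)) this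
    rw [Real.log_exp] at this
    linarith
  -- interior case: -1 < m < 1
  set r : ℝ := (1 + m) / 2 with hr_def
  set s : ℝ := (1 - m) / 2 with hs_def
  have hr : 0 < r := by simp [hr_def]; linarith
  have hs : 0 < s := by simp [hs_def]; linarith
  set p : ℝ := Real.exp x / (2 * Real.cosh x) with hp_def
  set q : ℝ := Real.exp (-x) / (2 * Real.cosh x) with hq_def
  have hp : 0 < p := by positivity
  have hq : 0 < q := by positivity
  have hpq : p + q = 1 := by
    rw [hp_def, hq_def, ← add_div, hZeq, div_self]
    rw [← hZeq]; exact hZ.ne'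
  have hlp : Real.log p = x - Real.log (2 * Real.cosh x) := by
    rw [hp_def, Real.log_div (Real.exp_ne_zero x) hZ.ne', Real.log_exp]
  have hlq : Real.log q = -x - Real.log (2 * Real.cosh x) := by
    rw [hq_def, Real.log_div (Real.exp_ne_zero (-x)) hZ.ne', Real.log_exp]
  have key1 : r * Real.log p - r * Real.log r ≤ p - r := by
    have h := Real.log_le_sub_one_of_pos (div_pos hp hr)
    rw [Real.log_div hp.ne' hr.ne'] at h
    have hdiv : r * (p / r) = p := by field_simp
    nlinarith [mul_le_mul_of_nonneg_left h hr.le]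
  have key2 : s * Real.log q - s * Real.log s ≤ q - s := by
    have h := Real.log_le_sub_one_of_pos (div_pos hq hs)
    rw [Real.log_div hq.ne' hs.ne'] at h
    have hdiv : s * (q / s) = q := by field_simp
    nlinarith [mul_le_mul_of_nonneg_left h hs.le]
  have hrs : r + s = 1 := by rw [hr_def, hs_def]; ring
  have hrms : r - s = m := by rw [hr_def, hs_def]; ring
  have hg : gEntropy m = s * Real.log s + r * Real.log r := by
    simp [gEntropy, hr_def, hs_def]
  rw [hg]
  have e1 : r * Real.log p = r * x - r * Real.log (2 * Real.cosh x) := by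
    rw [hlp]; ring
  have e2 : s * Real.log q = s * (-x) - s * Real.log (2 * Real.cosh x) := by
    rw [hlq]; ring
  have hmx : m * x = r * x - s * x := by rw [← hrms]; ring
  have hLsum : r * Real.log (2 * Real.cosh x) + s * Real.log (2 * Real.cosh x)
      = Real.log (2 * Real.cosh x) := by rw [← add_mul, hrs, one_mul]
  linarith [key1, key2]

lemma legendre_eq (x : ℝ) :
    Real.tanh x * x - gEntropy (Real.tanh x) = Real.log (2 * Real.cosh x) := by
  have hc : 0 < Real.cosh x := Real.cosh_pos x
  have hZ : (0:ℝ) < 2 * Real.cosh x := by positivity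
  have h1 : (1 - Real.tanh x) / 2 = Real.exp (-x) / (2 * Real.cosh x) := by
    rw [Real.tanh_eq_sinh_div_cosh]
    field_simp
    nlinarith [Real.cosh_sub_sinh x]
  have h2 : (1 + Real.tanh x) / 2 = Real.exp x / (2 * Real.cosh x) := by
    rw [Real.tanh_eq_sinh_div_cosh]
    field_simp
    nlinarith [Real.cosh_add_sinh x]
  have hl1 : Real.log ((1 - Real.tanh x) / 2) = -x - Real.log (2 * Real.cosh x) := by
    rw [h1, Real.log_div (Real.exp_ne_zero (-x)) hZ.ne', Real.log_exp]
  have hl2 : Real.log ((1 + Real.tanh x) / 2) = x - Real.log (2 * Real.cosh x) := by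
    rw [h2, Real.log_div (Real.exp_ne_zero x) hZ.ne', Real.log_exp]
  unfold gEntropy
  rw [hl1, hl2]
  ring

lemma abs_tanh_le (x : ℝ) : -1 ≤ Real.tanh x ∧ Real.tanh x ≤ 1 := by
  have hc : 0 < Real.cosh x := Real.cosh_pos x
  rw [Real.tanh_eq_sinh_div_cosh]
  constructor
  · rw [le_div_iff₀ hc]; nlinarith [Real.cosh_add_sinh x, Real.exp_pos x]
  · rw [div_le_iff₀ hc]; nlinarith [Real.cosh_sub_sinh x, Real.exp_pos (-x)]

theorem gaussian_vs_entropy_variational_formulas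
    (a b : ℝ) (ha : 0 < a) :
    BddAbove (Set.range fun u : ℝ =>
      Real.log (2 * Real.cosh (a * u + b)) - a * u ^ 2 / 2) ∧
    BddAbove (Set.range fun m : Set.Icc (-1 : ℝ) 1 =>
      a * (m : ℝ) ^ 2 / 2 + b * (m : ℝ) - gEntropy m) ∧
    (⨆ u : ℝ, (Real.log (2 * Real.cosh (a * u + b)) - a * u ^ 2 / 2)) =
      ⨆ m : Set.Icc (-1 : ℝ) 1, (a * (m : ℝ) ^ 2 / 2 + b * (m : ℝ) - gEntropy m) := by
  set F : ℝ → ℝ := fun u => Real.log (2 * Real.cosh (a * u + b)) - a * u ^ 2 / 2 with hF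
  set G : Set.Icc (-1:ℝ) 1 → ℝ := fun m => a * (m : ℝ) ^ 2 / 2 + b * (m : ℝ) - gEntropy m with hG
  -- F is bounded above
  have hlogcosh : ∀ x : ℝ, Real.log (2 * Real.cosh x) ≤ Real.log 2 + |x| := by
    intro x
    have h1 : 2 * Real.cosh x ≤ 2 * Real.exp |x| := by
      rw [Real.cosh_eq]
      have := Real.exp_le_exp.2 (le_abs_self x)
      have := Real.exp_le_exp.2 (neg_le_abs x)
      linarith
    calc Real.log (2 * Real.cosh x) ≤ Real.log (2 * Real.exp |x|) :=
          Real.log_le_log (by positivity) h1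
      _ = Real.log 2 + |x| := by
          rw [Real.log_mul two_ne_zero (Real.exp_ne_zero _), Real.log_exp]
  have hFbdd : BddAbove (Set.range F) := by
    refine ⟨Real.log 2 + |b| + a / 2, ?_⟩
    rintro _ ⟨u, rfl⟩
    have h1 := hlogcosh (a * u + b)
    have h2 : |a * u + b| ≤ a * |u| + |b| := by
      calc |a * u + b| ≤ |a * u| + |b| := abs_add_le _ _
        _ = a * |u| + |b| := by rw [abs_mul, abs_of_pos ha]
    have h3 : a * |u| - a * u ^ 2 / 2 ≤ a / 2 := by
      nlinarith [sq_nonneg (|u| - 1), sq_abs u]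
    simp only [hF]
    linarith
  -- G ≤ F at the same point
  have hGF : ∀ m : Set.Icc (-1:ℝ) 1, G m ≤ F (m : ℝ) := by
    rintro ⟨m, hm1, hm2⟩
    have := legendre_le (a * m + b) m hm1 hm2
    simp only [hG, hF]
    nlinarith [this]
  have hGbdd : BddAbove (Set.range G) := by
    obtain ⟨C, hC⟩ := hFbdd
    refine ⟨C, ?_⟩
    rintro _ ⟨m, rfl⟩
    exact le_trans (hGF m) (hC ⟨(m : ℝ), rfl⟩)
  haveI : Nonempty (Set.Icc (-1:ℝ) 1) := ⟨⟨0, by norm_num⟩⟩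
  refine ⟨hFbdd, hGbdd, le_antisymm ?_ ?_⟩
  · apply ciSup_le
    intro u
    set t : ℝ := Real.tanh (a * u + b) with ht
    obtain ⟨ht1, ht2⟩ := abs_tanh_le (a * u + b)
    have hle : F u ≤ G ⟨t, ht1, ht2⟩ := by
      have heq := legendre_eq (a * u + b)
      simp only [hF, hG]
      rw [← heq]
      nlinarith [sq_nonneg (u - t)]
    exact le_trans hle (le_ciSup hGbdd ⟨t, ht1, ht2⟩)
  · apply ciSup_le
    intro m
    exact le_trans (hGF m) (le_ciSup hFbdd (m : ℝ))
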